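/- arXiv:2004.10062 — 2 statements merged into one kernel-verified Lean document; each statement's English description precedes it below -/
import Mathlib

section
/- Let L > 0, g ∈ C¹((-π/2, π/2)) be odd with g'(θ) > 0 for all θ and g(θ) → +∞ as θ → π/2. Let χ : (-π/2, π/2) × [0, R₀) → ℝ be continuous, continuously differentiable in a neighborhood of (0,0), with χ(0, 𝓡) = 0 for all 𝓡, χ(θ, 0) = g(θ) for all θ, ∂_θχ(0,0) = g'(0) > 0, and suppose there is a constant C̄ > 0 with |χ(θ, 𝓡) - g(θ)| ≤ C̄ for all (θ, 𝓡). Then there exists 𝓡₁ > 0 such that for all 𝓡 < 𝓡₁, χ(θ, 𝓡) = 0 if and only if θ = 0. -/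
open Set Real Filter

/-- abstract uniqueness for the rotating-obstacle equilibrium:
with `g` odd, strictly increasing (derivative `g' > 0`), blowing up at `π/2`,
and `χ` a continuous perturbation of `g` which is `C¹` near `(0,0)`, vanishes
on `θ = 0`, equals `g` at `𝓡 = 0`, and stays uniformly `Cbar`-close to `g`,
there is `𝓡₁ > 0` such that for `𝓡 < 𝓡₁` the only zero of `χ(·,𝓡)` is `θ = 0`. -/
theorem stmt6 (R₀ : ℝ) (hR₀ : 0 < R₀) (g g' : ℝ → ℝ) (χ : ℝ → ℝ → ℝ) (Cbar : ℝ)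
    (hCbar : 0 < Cbar)
    (hg_diff : ∀ θ ∈ Ioo (-(π / 2)) (π / 2), HasDerivAt g (g' θ) θ)
    (hg_odd : ∀ θ ∈ Ioo (-(π / 2)) (π / 2), g (-θ) = -g θ)
    (hg' : ∀ θ ∈ Ioo (-(π / 2)) (π / 2), 0 < g' θ)
    (hg_blow : Tendsto g (nhdsWithin (π / 2) (Iio (π / 2))) atTop)
    (hχ_cont : ContinuousOn (fun p : ℝ × ℝ => χ p.1 p.2)
      (Ioo (-(π / 2)) (π / 2) ×ˢ Ico 0 R₀))
    (hχ_C1 : ContDiffAt ℝ 1 (fun p : ℝ × ℝ => χ p.1 p.2) (0, 0))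
    (hχ0 : ∀ 𝓡 ∈ Ico (0 : ℝ) R₀, χ 0 𝓡 = 0)
    (hχg : ∀ θ ∈ Ioo (-(π / 2)) (π / 2), χ θ 0 = g θ)
    (hχ_deriv : HasDerivAt (fun θ => χ θ 0) (g' 0) 0)
    (hbound : ∀ θ ∈ Ioo (-(π / 2)) (π / 2), ∀ 𝓡 ∈ Ico (0 : ℝ) R₀,
      |χ θ 𝓡 - g θ| ≤ Cbar) :
    ∃ 𝓡₁ > 0, ∀ 𝓡, 0 ≤ 𝓡 → 𝓡 < 𝓡₁ → 𝓡 < R₀ →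
      ∀ θ ∈ Ioo (-(π / 2)) (π / 2), (χ θ 𝓡 = 0 ↔ θ = 0) := by
  have hpi : (0:ℝ) < π / 2 := by positivity
  have h0mem : (0:ℝ) ∈ Ioo (-(π / 2)) (π / 2) := ⟨by linarith, hpi⟩
  have hg0 : g 0 = 0 := by
    have := hg_odd 0 h0mem; simp at this; linarith
  -- g strictly monotone on the interval
  have hgmono : StrictMonoOn g (Ioo (-(π / 2)) (π / 2)) := by
    apply strictMonoOn_of_deriv_pos (convex_Ioo _ _)
    · exact fun x hx => (hg_diff x hx).continuousAt.continuousWithinAt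
    · intro x hx
      rw [interior_Ioo] at hx
      rw [(hg_diff x hx).deriv]
      exact hg' x hx
  -- choose θ⁺ with 0 < θ⁺ < π/2 and g θ⁺ > Cbar
  obtain ⟨θp, ⟨hθp1, hθp2⟩, hθp3⟩ :
      ∃ θ, (g θ > Cbar ∧ 0 < θ) ∧ θ < π / 2 := by
    have h1 : ∀ᶠ θ in nhdsWithin (π/2) (Iio (π/2)), g θ > Cbar :=
      hg_blow.eventually (eventually_gt_atTop Cbar)
    have h2 : ∀ᶠ θ in nhdsWithin (π/2) (Iio (π/2)), 0 < θ :=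
      eventually_nhdsWithin_of_eventually_nhds (eventually_gt_nhds hpi)
    have h3 : ∀ᶠ θ in nhdsWithin (π/2) (Iio (π/2)), θ < π/2 :=
      eventually_mem_nhdsWithin
    exact ((h1.and h2).and h3).exists
  have hθpmem : θp ∈ Ioo (-(π / 2)) (π / 2) := ⟨by linarith, hθp3⟩
  have hθpneg : -θp ∈ Ioo (-(π / 2)) (π / 2) := ⟨by linarith, by linarith⟩
  -- strict derivative of χ at (0,0)
  set f : ℝ × ℝ → ℝ := fun p => χ p.1 p.2 with hf
  have hD : HasStrictFDerivAt f (fderiv ℝ f (0,0)) (0,0) :=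
    hχ_C1.hasStrictFDerivAt one_ne_zero
  set D := fderiv ℝ f (0,0) with hDdef
  have hg'0 : 0 < g' 0 := hg' 0 h0mem
  have hD10 : D (1,0) = g' 0 := by
    have h1 : HasDerivAt (fun θ : ℝ => ((θ, 0) : ℝ × ℝ)) ((1:ℝ),(0:ℝ)) 0 :=
      HasDerivAt.prodMk (hasDerivAt_id (0:ℝ)) (hasDerivAt_const (0:ℝ) (0:ℝ))
    have hcomp := hD.hasFDerivAt.comp_hasDerivAt_of_eq 0 h1 rfl
    exact (hcomp.unique hχ_deriv)
  -- quantitative bound from strict differentiability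
  obtain ⟨δ, hδpos, hδ⟩ : ∃ δ > 0, ∀ θ 𝓡 : ℝ, |θ| < δ → |𝓡| < δ →
      |f (θ, 𝓡) - f (0, 𝓡) - θ * g' 0| ≤ g' 0 / 2 * |θ| := by
    have hev := hD.isLittleO.def (half_pos hg'0)
    rw [Metric.eventually_nhds_iff] at hev
    obtain ⟨ε, hε, hε2⟩ := hev
    refine ⟨ε, hε, fun θ 𝓡 hθ h𝓡 => ?_⟩
    have hd : dist (((θ, 𝓡), (0, 𝓡)) : (ℝ × ℝ) × (ℝ × ℝ)) ((0,0),(0,0)) < ε := by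
      simp [Prod.dist_eq, Real.dist_eq, Prod.norm_def, Real.norm_eq_abs, max_lt_iff, hθ, h𝓡,
        hε]
    have := hε2 hd
    simp only [Real.norm_eq_abs, Prod.norm_def] at this
    have hlin : D ((θ, 𝓡) - (0, 𝓡)) = θ * g' 0 := by
      have : ((θ, 𝓡) - (0, 𝓡) : ℝ × ℝ) = θ • ((1:ℝ), (0:ℝ)) := by
        simp [Prod.ext_iff]
      rw [this, map_smul, hD10]; simp [mul_comm]
    rw [hlin] at this
    calc |f (θ, 𝓡) - f (0, 𝓡) - θ * g' 0| ≤ g' 0 / 2 * ‖((θ, 𝓡) - (0, 𝓡) : ℝ × ℝ)‖ := this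
      _ = g' 0 / 2 * |θ| := by simp [Prod.norm_def]
  -- middle compact region
  set K : Set ℝ := Icc (-θp) θp ∩ (Ioo (-δ) δ)ᶜ with hK
  have hKcompact : IsCompact K := isCompact_Icc.inter_right isOpen_Ioo.isClosed_compl
  set S : Set (ℝ × ℝ) := Ioo (-(π / 2)) (π / 2) ×ˢ Ico 0 R₀ with hS
  obtain ⟨U, hUopen, hUeq⟩ : ∃ U, IsOpen U ∧ f ⁻¹' ({0}ᶜ) ∩ S = U ∩ S := by
    have := continuousOn_iff'.1 hχ_cont ({0}ᶜ) isOpen_compl_singleton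
    obtain ⟨U, h1, h2⟩ := this
    exact ⟨U, h1, h2⟩
  have key : ∀ θ ∈ K, ((θ, (0:ℝ)) : ℝ × ℝ) ∈ U := by
    intro θ hθK
    have hθIoo : θ ∈ Ioo (-(π / 2)) (π / 2) := by
      obtain ⟨⟨h1, h2⟩, _⟩ := hθK
      constructor <;> [linarith; linarith]
    have hθne : θ ≠ 0 := by
      intro h
      exact hθK.2 (by rw [h]; exact ⟨by linarith, hδpos⟩)
    have hgne : g θ ≠ 0 := by
      rcases lt_or_gt_of_ne hθne with h | h
      · have := hgmono hθIoo h0mem h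
        rw [hg0] at this; linarith
      · have := hgmono h0mem hθIoo h
        rw [hg0] at this; linarith
    have hmemS : ((θ, 0) : ℝ × ℝ) ∈ S := ⟨hθIoo, le_refl 0, hR₀⟩
    have : ((θ, 0) : ℝ × ℝ) ∈ f ⁻¹' ({0}ᶜ) ∩ S := by
      refine ⟨?_, hmemS⟩
      simp only [mem_preimage, mem_compl_iff, mem_singleton_iff]
      rw [hf]; simpa [hχg θ hθIoo] using hgne
    rw [hUeq] at this
    exact this.1
  have hKU : K ×ˢ ({0} : Set ℝ) ⊆ U := by
    rintro ⟨θ, r⟩ ⟨hθK, hr⟩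
    have : r = 0 := hr
    subst this
    exact key θ hθK
  obtain ⟨u, v, huo, hvo, hKu, h0v, huv⟩ :=
    generalized_tube_lemma hKcompact isCompact_singleton hUopen hKU
  obtain ⟨ρ, hρpos, hρ⟩ := Metric.isOpen_iff.1 hvo 0 (h0v rfl)
  refine ⟨min δ ρ, lt_min hδpos hρpos, fun 𝓡 h𝓡0 h𝓡1 h𝓡R θ hθ => ?_⟩
  have h𝓡δ : 𝓡 < δ := lt_of_lt_of_le h𝓡1 (min_le_left _ _)
  have h𝓡ρ : 𝓡 < ρ := lt_of_lt_of_le h𝓡1 (min_le_right _ _)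
  have h𝓡Ico : 𝓡 ∈ Ico (0:ℝ) R₀ := ⟨h𝓡0, h𝓡R⟩
  constructor
  · intro hzero
    by_contra hθne
    -- case analysis on |θ|
    rcases lt_or_ge (|θ|) δ with hcase | hcase
    · -- near zero: strict derivative estimate
      have := hδ θ 𝓡 hcase (by rwa [abs_of_nonneg h𝓡0])
      rw [hf] at this
      simp only at this
      rw [hzero, hχ0 𝓡 h𝓡Ico] at this
      have h1 : |θ * g' 0| ≤ g' 0 / 2 * |θ| := by
        calc |θ * g' 0| = |0 - 0 - θ * g' 0| := by simp
          _ ≤ g' 0 / 2 * |θ| := this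
      rw [abs_mul, abs_of_pos hg'0] at h1
      have hθabs : 0 < |θ| := abs_pos.2 hθne
      nlinarith
    · rcases le_or_gt (|θ|) θp with hcase2 | hcase2
      · -- middle region: tube lemma
        have hθK : θ ∈ K := by
          refine ⟨abs_le.1 hcase2, ?_⟩
          intro ⟨h1, h2⟩
          have : |θ| < δ := abs_lt.2 ⟨h1, h2⟩
          linarith
        have hmem : ((θ, 𝓡) : ℝ × ℝ) ∈ U ∩ S := by
          refine ⟨huv ⟨hKu hθK, hρ (by simp [Real.dist_eq, abs_of_nonneg h𝓡0, h𝓡ρ])⟩,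
            hθ, h𝓡Ico⟩
        rw [← hUeq] at hmem
        exact hmem.1 hzero
      · -- outer region: uniform bound beats g
        have hb := hbound θ hθ 𝓡 h𝓡Ico
        rcases lt_or_gt_of_ne hθne with hneg | hpos
        · have hθle : θ ≤ -θp := by
            rw [abs_of_neg hneg] at hcase2; linarith
          have hgθ : g θ ≤ g (-θp) := by
            rcases eq_or_lt_of_le hθle with h | h
            · rw [h]
            · exact le_of_lt (hgmono hθ hθpneg h)
          have : g (-θp) = -g θp := hg_odd θp hθpmem
          rw [hzero] at hb
          have := abs_le.1 hb
          linarith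
        · have hθge : θp ≤ θ := by
            rw [abs_of_pos hpos] at hcase2; linarith
          have hgθ : g θp ≤ g θ := by
            rcases eq_or_lt_of_le hθge with h | h
            · rw [h]
            · exact le_of_lt (hgmono hθpmem hθ h)
          rw [hzero] at hb
          have := abs_le.1 hb
          linarith
  · intro h; subst h; exact hχ0 𝓡 h𝓡Ico
end

section
/- Let L > 1 and f ∈ C¹((-L+1, L-1)) satisfy f'(h) > 0 for all h and |f(h)|·(L-1-|h|)^{3/2} → +∞ as |h| → L-1. Let ψ : (-L+1, L-1) × [0, R₀) → ℝ be continuous, continuously differentiable near (0,0), with ψ(0,𝓡) = 0 for all 𝓡, ψ(h,0) = f(h), and suppose there is C̄ > 0 such that |ψ(h,𝓡) - f(h)| ≤ C̄ (L-1-|h|)^{-3/2} for all (h,𝓡). Then there exists 𝓡₁ > 0 such that for all 0 < 𝓡 < 𝓡₁: ψ(h,𝓡) > 0 for h ∈ (0, L-1), ψ(h,𝓡) < 0 for h ∈ (-L+1, 0), and in particular ψ(h,𝓡) = 0 if and only if h = 0. -/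
open Set Real Filter

/-- On a compact set `K`, if `g(·,0) > 0`, then `g > 0` on `K × [0, r')` for some `r' > 0`. -/
lemma aux_compact_pos (K : Set ℝ) (hK : IsCompact K) (r : ℝ) (hr : 0 < r)
    (g : ℝ → ℝ → ℝ)
    (hg : ContinuousOn (fun p : ℝ × ℝ => g p.1 p.2) (K ×ˢ Icc 0 r))
    (h0 : ∀ h ∈ K, 0 < g h 0) :
    ∃ r' > 0, ∀ h ∈ K, ∀ 𝓡 ∈ Ico (0:ℝ) r', 0 < g h 𝓡 := by
  set C : Set (ℝ × ℝ) := K ×ˢ Icc 0 r with hC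
  have hCcomp : IsCompact C := hK.prod isCompact_Icc
  set S : Set (ℝ × ℝ) := C ∩ (fun p : ℝ × ℝ => g p.1 p.2) ⁻¹' (Iic 0) with hSdef
  have hSsub : S ⊆ C := inter_subset_left
  have hSclosed : IsClosed S :=
    hg.preimage_isClosed_of_isClosed hCcomp.isClosed isClosed_Iic
  have hScomp : IsCompact S := hCcomp.of_isClosed_subset hSclosed hSsub
  rcases S.eq_empty_or_nonempty with hemp | hne
  · refine ⟨r, hr, fun h hh 𝓡 h𝓡 => ?_⟩
    by_contra hle
    have : (h, 𝓡) ∈ S := ⟨⟨hh, h𝓡.1, le_of_lt h𝓡.2⟩, le_of_not_gt hle⟩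
    simp [hemp] at this
  · obtain ⟨p₀, hp₀S, hmin⟩ := hScomp.exists_isMinOn hne continuous_snd.continuousOn
    have hp₀C : p₀ ∈ C := hSsub hp₀S
    have hp₀2 : 0 < p₀.2 := by
      rcases lt_or_eq_of_le hp₀C.2.1 with h | h
      · exact h
      · exfalso
        have h1 : 0 < g p₀.1 p₀.2 := by rw [← h]; exact h0 p₀.1 hp₀C.1
        exact absurd hp₀S.2 (not_le.2 h1)
    refine ⟨p₀.2, hp₀2, fun h hh 𝓡 h𝓡 => ?_⟩
    by_contra hle
    have hmem : (h, 𝓡) ∈ S :=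
      ⟨⟨hh, h𝓡.1, le_trans (le_of_lt h𝓡.2) hp₀C.2.2⟩, le_of_not_gt hle⟩
    exact absurd (hmin hmem) (not_le.2 h𝓡.2)

/-- abstract content of Lemma 6 (vertical case): `f` strictly
increasing with strong-force blowup `|f(h)|(L-1-|h|)^{3/2} → ∞`, and `ψ` a
perturbation of `f` with `|ψ - f| ≤ Cbar (L-1-|h|)^{-3/2}`; then for small
`𝓡 > 0`, `ψ(·,𝓡)` is positive on `(0,L-1)`, negative on `(-L+1,0)`, and
vanishes only at `h = 0`. -/
theorem stmt7 (L R₀ : ℝ) (hL : 1 < L) (hR₀ : 0 < R₀)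
    (f f' : ℝ → ℝ) (ψ : ℝ → ℝ → ℝ) (Cbar : ℝ) (hCbar : 0 < Cbar)
    (hf_diff : ∀ h ∈ Ioo (-L + 1) (L - 1), HasDerivAt f (f' h) h)
    (hf' : ∀ h ∈ Ioo (-L + 1) (L - 1), 0 < f' h)
    (hf_blow : ∀ M > 0, ∃ η > 0, ∀ h ∈ Ioo (-L + 1) (L - 1),
      L - 1 - |h| < η → |f h| * (L - 1 - |h|) ^ ((3 : ℝ) / 2) > M)
    (hψ_cont : ContinuousOn (fun p : ℝ × ℝ => ψ p.1 p.2)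
      (Ioo (-L + 1) (L - 1) ×ˢ Ico 0 R₀))
    (hψ_C1 : ContDiffAt ℝ 1 (fun p : ℝ × ℝ => ψ p.1 p.2) (0, 0))
    (hψ0 : ∀ 𝓡 ∈ Ico (0 : ℝ) R₀, ψ 0 𝓡 = 0)
    (hψf : ∀ h ∈ Ioo (-L + 1) (L - 1), ψ h 0 = f h)
    (hbound : ∀ h ∈ Ioo (-L + 1) (L - 1), ∀ 𝓡 ∈ Ico (0 : ℝ) R₀,
      |ψ h 𝓡 - f h| ≤ Cbar * (L - 1 - |h|) ^ (-(3 : ℝ) / 2)) :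
    ∃ 𝓡₁ > 0, ∀ 𝓡, 0 < 𝓡 → 𝓡 < 𝓡₁ → 𝓡 < R₀ →
      (∀ h ∈ Ioo (0 : ℝ) (L - 1), 0 < ψ h 𝓡) ∧
      (∀ h ∈ Ioo (-L + 1) (0 : ℝ), ψ h 𝓡 < 0) ∧
      (∀ h ∈ Ioo (-L + 1) (L - 1), (ψ h 𝓡 = 0 ↔ h = 0)) := by
  have hL0 : (0:ℝ) < L - 1 := by linarith
  have hdom0 : (0:ℝ) ∈ Ioo (-L+1) (L-1) := ⟨by linarith, hL0⟩
  have hf0 : f 0 = 0 := by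
    have h1 := hψf 0 hdom0
    have h2 := hψ0 0 ⟨le_refl 0, hR₀⟩
    linarith
  -- strict monotonicity of f
  have hmono : StrictMonoOn f (Ioo (-L+1) (L-1)) := by
    apply strictMonoOn_of_deriv_pos (convex_Ioo _ _)
    · exact fun x hx => (hf_diff x hx).continuousAt.continuousWithinAt
    · intro x hx
      rw [interior_Ioo] at hx
      rw [(hf_diff x hx).deriv]
      exact hf' x hx
  have hfpos : ∀ h ∈ Ioo (0:ℝ) (L-1), 0 < f h := by
    intro h hh
    have : f 0 < f h := hmono hdom0 ⟨by linarith [hh.1], hh.2⟩ hh.1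
    linarith
  have hfneg : ∀ h ∈ Ioo (-L+1) (0:ℝ), f h < 0 := by
    intro h hh
    have : f h < f 0 := hmono ⟨hh.1, by linarith [hh.2]⟩ hdom0 hh.2
    linarith
  -- boundary region
  obtain ⟨η, hη, hηb⟩ := hf_blow Cbar hCbar
  have hbdry : ∀ h ∈ Ioo (-L+1) (L-1), L - 1 - |h| < η → ∀ 𝓡 ∈ Ico (0:ℝ) R₀,
      |ψ h 𝓡 - f h| < |f h| := by
    intro h hh hlt 𝓡 h𝓡
    have ht : 0 < L - 1 - |h| := by
      rcases abs_cases h with ⟨he, _⟩ | ⟨he, _⟩ <;> rw [he]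
      · linarith [hh.2]
      · linarith [hh.1]
    have hblow := hηb h hh hlt
    have hpow : (0:ℝ) < (L - 1 - |h|) ^ ((3:ℝ)/2) := Real.rpow_pos_of_pos ht _
    have hkey : Cbar * (L - 1 - |h|) ^ (-(3:ℝ)/2) < |f h| := by
      rw [show (-(3:ℝ)/2) = -((3:ℝ)/2) by ring, Real.rpow_neg ht.le,
        ← div_eq_mul_inv, div_lt_iff₀ hpow]
      linarith
    exact lt_of_le_of_lt (hbound h hh 𝓡 h𝓡) hkey
  -- strict derivative at (0,0)
  set D := fderiv ℝ (fun p : ℝ × ℝ => ψ p.1 p.2) (0,0) with hDdef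
  have hstrict : HasStrictFDerivAt (fun p : ℝ × ℝ => ψ p.1 p.2) D ((0:ℝ),(0:ℝ)) :=
    hψ_C1.hasStrictFDerivAt one_ne_zero
  have hf'0 : 0 < f' 0 := hf' 0 hdom0
  have hDval : D (1, 0) = f' 0 := by
    have hι : HasFDerivAt (fun h : ℝ => ((h, 0) : ℝ × ℝ))
        (ContinuousLinearMap.inl ℝ ℝ ℝ) 0 := (ContinuousLinearMap.inl ℝ ℝ ℝ).hasFDerivAt
    have h1 := HasFDerivAt.comp (𝕜 := ℝ) (f := fun h : ℝ => ((h, 0) : ℝ × ℝ))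
      (g := fun p : ℝ × ℝ => ψ p.1 p.2) (0 : ℝ) hstrict.hasFDerivAt hι
    have h1' : HasDerivAt (fun h : ℝ => ψ h 0)
        ((D.comp (ContinuousLinearMap.inl ℝ ℝ ℝ)) 1) 0 := h1.hasDerivAt
    have h2 : HasDerivAt (fun h : ℝ => ψ h 0) (f' 0) 0 := by
      refine (hf_diff 0 hdom0).congr_of_eventuallyEq ?_
      filter_upwards [Ioo_mem_nhds hdom0.1 hdom0.2] with x hx
      exact hψf x hx
    have h3 := h1'.unique h2
    simpa [ContinuousLinearMap.comp_apply] using h3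
  have hlo := Asymptotics.isLittleO_iff.mp hstrict.isLittleO (by positivity : (0:ℝ) < f' 0 / 2)
  rw [Metric.eventually_nhds_iff] at hlo
  obtain ⟨δ, hδ, hδball⟩ := hlo
  have hIFT : ∀ h : ℝ, |h| < δ → ∀ 𝓡 ∈ Ico (0:ℝ) R₀, |𝓡| < δ →
      |ψ h 𝓡 - f' 0 * h| ≤ f' 0 / 2 * |h| := by
    intro h hh 𝓡 h𝓡 h𝓡δ
    have hdist : dist ((((h,𝓡) : ℝ × ℝ),((0,𝓡) : ℝ × ℝ))) ((((0:ℝ),(0:ℝ)),((0:ℝ),(0:ℝ)))) < δ := by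
      simp only [Prod.dist_eq, Real.dist_eq, sub_zero, sub_self, abs_zero]
      exact max_lt (max_lt hh h𝓡δ) (max_lt hδ h𝓡δ)
    have hb := hδball hdist
    simp only at hb
    have hsub : ((h,𝓡) : ℝ × ℝ) - ((0,𝓡) : ℝ × ℝ) = (h, 0) := by
      simp [Prod.ext_iff]
    rw [hsub] at hb
    have hDh : D (h, 0) = f' 0 * h := by
      have hsm : ((h:ℝ), (0:ℝ)) = h • ((1:ℝ), (0:ℝ)) := by simp
      rw [hsm, map_smul, hDval, smul_eq_mul, mul_comm]
    have hnorm : ‖((h:ℝ), (0:ℝ))‖ = |h| := by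
      simp [Prod.norm_def, Real.norm_eq_abs]
    rw [hDh, hnorm, hψ0 𝓡 h𝓡] at hb
    simpa using hb
  -- middle compact regions
  obtain ⟨c, hc⟩ : ∃ c : ℝ, c = L - 1 - η/2 := ⟨_, rfl⟩
  have hsubP : Icc δ c ×ˢ Icc 0 (R₀/2) ⊆ Ioo (-L+1) (L-1) ×ˢ Ico 0 R₀ := by
    rintro ⟨h, 𝓡⟩ ⟨⟨h1, h2⟩, r1, r2⟩
    exact ⟨⟨by linarith, by linarith⟩, r1, by linarith⟩
  have hsubN : Icc (-c) (-δ) ×ˢ Icc 0 (R₀/2) ⊆ Ioo (-L+1) (L-1) ×ˢ Ico 0 R₀ := by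
    rintro ⟨h, 𝓡⟩ ⟨⟨h1, h2⟩, r1, r2⟩
    exact ⟨⟨by linarith, by linarith⟩, r1, by linarith⟩
  obtain ⟨rp, hrp, hrpP⟩ := aux_compact_pos (Icc δ c) isCompact_Icc (R₀/2)
    (by linarith) ψ (hψ_cont.mono hsubP) (by
      intro h hh
      have hd : h ∈ Ioo (-L+1) (L-1) := ⟨by linarith [hh.1], by linarith [hh.2]⟩
      rw [hψf h hd]
      exact hfpos h ⟨by linarith [hh.1], hd.2⟩)
  obtain ⟨rn, hrn, hrnP⟩ := aux_compact_pos (Icc (-c) (-δ)) isCompact_Icc (R₀/2)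
    (by linarith) (fun h 𝓡 => -ψ h 𝓡) ((hψ_cont.mono hsubN).neg) (by
      intro h hh
      have hd : h ∈ Ioo (-L+1) (L-1) := ⟨by linarith [hh.1], by linarith [hh.2]⟩
      simp only [hψf h hd]
      have := hfneg h ⟨hd.1, by linarith [hh.2]⟩
      linarith)
  refine ⟨min δ (min rp rn), lt_min hδ (lt_min hrp hrn), ?_⟩
  intro 𝓡 h𝓡0 h𝓡1 h𝓡R
  have h𝓡Ico : 𝓡 ∈ Ico (0:ℝ) R₀ := ⟨h𝓡0.le, h𝓡R⟩
  have h𝓡δ : 𝓡 < δ := lt_of_lt_of_le h𝓡1 (min_le_left _ _)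
  have h𝓡rp : 𝓡 < rp := lt_of_lt_of_le h𝓡1 (le_trans (min_le_right _ _) (min_le_left _ _))
  have h𝓡rn : 𝓡 < rn := lt_of_lt_of_le h𝓡1 (le_trans (min_le_right _ _) (min_le_right _ _))
  have Hpos : ∀ h ∈ Ioo (0:ℝ) (L-1), 0 < ψ h 𝓡 := by
    intro h hh
    by_cases hcase : h < δ
    · have hift := hIFT h (by rw [abs_of_pos hh.1]; exact hcase) 𝓡 h𝓡Ico
        (by rw [abs_of_pos h𝓡0]; exact h𝓡δ)
      rw [abs_of_pos hh.1] at hift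
      have habs := abs_le.mp hift
      nlinarith [mul_pos hf'0 hh.1, habs.1]
    · push_neg at hcase
      by_cases hcase2 : h ≤ c
      · exact hrpP h ⟨hcase, hcase2⟩ 𝓡 ⟨h𝓡0.le, h𝓡rp⟩
      · push_neg at hcase2
        have hhd : h ∈ Ioo (-L+1) (L-1) := ⟨by linarith [hh.1], hh.2⟩
        have hbb := hbdry h hhd (by rw [abs_of_pos hh.1]; rw [hc] at hcase2; linarith) 𝓡 h𝓡Ico
        have hfp := hfpos h hh
        rw [abs_of_pos hfp] at hbb
        have := abs_lt.mp hbb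
        linarith [this.1]
  have Hneg : ∀ h ∈ Ioo (-L+1) (0:ℝ), ψ h 𝓡 < 0 := by
    intro h hh
    by_cases hcase : -δ < h
    · have hift := hIFT h (by rw [abs_of_neg hh.2]; linarith) 𝓡 h𝓡Ico
        (by rw [abs_of_pos h𝓡0]; exact h𝓡δ)
      rw [abs_of_neg hh.2] at hift
      have habs := abs_le.mp hift
      nlinarith [mul_pos hf'0 (neg_pos.mpr hh.2), habs.2]
    · push_neg at hcase
      by_cases hcase2 : -c ≤ h
      · have := hrnP h ⟨hcase2, hcase⟩ 𝓡 ⟨h𝓡0.le, h𝓡rn⟩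
        simpa using this
      · push_neg at hcase2
        have hhd : h ∈ Ioo (-L+1) (L-1) := ⟨hh.1, by linarith [hh.2]⟩
        have hbb := hbdry h hhd (by rw [abs_of_neg hh.2]; rw [hc] at hcase2; linarith) 𝓡 h𝓡Ico
        have hfn := hfneg h hh
        rw [abs_of_neg hfn] at hbb
        have := abs_lt.mp hbb
        linarith [this.2]
  refine ⟨Hpos, Hneg, ?_⟩
  intro h hh
  constructor
  · intro hz
    by_contra hne
    rcases lt_trichotomy h 0 with hlt | heq | hgt
    · exact absurd hz (ne_of_lt (Hneg h ⟨hh.1, hlt⟩))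
    · exact hne heq
    · exact absurd hz (ne_of_gt (Hpos h ⟨hgt, hh.2⟩))
  · intro hz
    rw [hz]
    exact hψ0 𝓡 h𝓡Ico
end
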